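/- With P₆ and δ as above (P₆(x,δ(x)) = 0) and P₃(x,φ) = (1+x)[(1+x)² − b(φ)] satisfying the compatibility ∂_x P₆ + P₃ ∂_φ P₆ = 2(∂_φ P₃)P₆, the implicit boundary curve δ satisfies δ'(x) = P₃(x, δ(x)). Consequently δ'(0) = 0 and δ''(0) = ∂_x P₃(0,0) = 2, so δ has a strict local minimum 0 at x = 0. -/

import Mathlib

/-- Partial derivative in the first variable. -/
noncomputable def pd1 (f : ℝ → ℝ → ℝ) (x y : ℝ) : ℝ := deriv (fun s => f s y) x

/-- Partial derivative in the second variable. -/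
noncomputable def pd2 (f : ℝ → ℝ → ℝ) (x y : ℝ) : ℝ := deriv (fun s => f x s) y

open Polynomial in
lemma finite_quartic (B φ : ℝ) : {t : ℝ | (3*t^2 - B)*(t^2 - B) = 6*φ}.Finite := by
  have hp : (C 3 * X^4 + C (-(4*B)) * X^2 + C (B^2 - 6*φ) : ℝ[X]) ≠ 0 := by
    intro h
    have := congrArg (fun p => Polynomial.coeff p 4) h
    simp only [coeff_add, coeff_C_mul, coeff_X_pow, coeff_C, coeff_zero] at this
    norm_num at this
  refine (Polynomial.finite_setOf_isRoot hp).subset ?_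
  intro t ht
  simp only [Set.mem_setOf_eq] at ht ⊢
  simp [Polynomial.IsRoot]
  nlinarith [ht]

open Polynomial in
lemma finite_sq (B : ℝ) : {t : ℝ | t^2 = B}.Finite := by
  have hp : (X^2 - C B : ℝ[X]) ≠ 0 := by
    intro h
    have := congrArg (fun p => Polynomial.coeff p 2) h
    simp only [coeff_sub, coeff_X_pow, coeff_C, coeff_zero] at this
    norm_num at this
  refine (Polynomial.finite_setOf_isRoot hp).subset ?_
  intro t ht
  simp only [Set.mem_setOf_eq] at ht
  simp [Polynomial.IsRoot, ht]

lemma hasDerivAt_P6_fst (φ A B : ℝ) (x : ℝ) :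
    HasDerivAt (fun s : ℝ => 6*φ*((1+s)^2 - A) - ((1+s)*((1+s)^2 - B))^2)
      (12*φ*(1+x) - 6*(1+x)^5 + 8*(1+x)^3*B - 2*(1+x)*B^2) x := by
  have hid : HasDerivAt (fun s : ℝ => 1 + s) 1 x := (hasDerivAt_id x).const_add 1
  have h2 : HasDerivAt (fun s : ℝ => (1+s)^2) (2*(1+x)) x := by
    simpa using hid.fun_pow 2
  have h3 : HasDerivAt (fun s : ℝ => (1+s)*((1+s)^2 - B))
      (1*((1+x)^2 - B) + (1+x)*(2*(1+x))) x := hid.mul (h2.sub_const B)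
  have h4 := h3.fun_pow 2
  have h5 := ((h2.sub_const A).const_mul (6*φ)).fun_sub h4
  exact h5.congr_deriv (by ring)

lemma sq_ne_of_gt_one {u v : ℝ} (hu : 1 < u) (hv : 1 < v) (huv : u ≠ v) : u^2 ≠ v^2 := by
  intro h
  have h2 : (u - v) * (u + v) = 0 := by linear_combination h
  rcases mul_eq_zero.mp h2 with h3 | h3
  · exact huv (by linarith)
  · linarith

lemma b_differentiable
    (a b : ℝ → ℝ) (P3 P6 : ℝ → ℝ → ℝ)
    (hP3 : ∀ x φ, P3 x φ = (1+x)*((1+x)^2 - b φ))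
    (hP6 : ∀ x φ, P6 x φ = 6*φ*((1+x)^2 - a φ) - (P3 x φ)^2)
    (ε : ℝ) (hε : 0 < ε)
    (hcompat : ∀ x ∈ Set.Ioo (-ε) ε, ∀ φ ∈ Set.Ioo (-ε) ε,
      pd1 P6 x φ + P3 x φ * pd2 P6 x φ = 2 * pd2 P3 x φ * P6 x φ)
    (φ₀ : ℝ) (hφ₀ : φ₀ ∈ Set.Ioo (-ε) ε) : DifferentiableAt ℝ b φ₀ := by
  by_contra hnd
  set B := b φ₀ with hB
  -- pd2 P3 vanishes (junk value) since b is not differentiable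
  have hE : ∀ x : ℝ, 1 + x ≠ 0 → pd2 P3 x φ₀ = 0 := by
    intro x hx
    apply deriv_zero_of_not_differentiableAt
    intro hdiff
    apply hnd
    have heq : b = fun s => (1+x)^2 - P3 x s * (1+x)⁻¹ := by
      funext s
      rw [hP3]
      field_simp
      ring
    rw [heq]
    exact (hdiff.mul_const _).const_sub _
  -- the relation forced by compatibility, for x ∈ (0, ε)
  have hDrel : ∀ x ∈ Set.Ioo (0:ℝ) ε,
      12*φ₀*(1+x) - 6*(1+x)^5 + 8*(1+x)^3*B - 2*(1+x)*B^2
        + (1+x)*((1+x)^2 - B) * pd2 P6 x φ₀ = 0 := by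
    intro x hx
    have hx' : x ∈ Set.Ioo (-ε) ε := ⟨by linarith [hx.1], hx.2⟩
    have hc := hcompat x hx' φ₀ hφ₀
    have hpd1 : pd1 P6 x φ₀
        = 12*φ₀*(1+x) - 6*(1+x)^5 + 8*(1+x)^3*B - 2*(1+x)*B^2 := by
      have hfe : (fun s => P6 s φ₀)
          = fun s : ℝ => 6*φ₀*((1+s)^2 - a φ₀) - ((1+s)*((1+s)^2 - B))^2 := by
        funext s; rw [hP6, hP3]
      unfold pd1
      rw [hfe]
      exact (hasDerivAt_P6_fst φ₀ (a φ₀) B x).deriv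
    rw [hpd1, hP3, hE x (by intro h; linarith [hx.1])] at hc
    linarith [hc]
  -- good parameters
  set Bad : Set ℝ := {t : ℝ | (3*t^2 - B)*(t^2 - B) = 6*φ₀} ∪ {t : ℝ | t^2 = B} with hBad
  have hTinf : (Set.Ioo (1:ℝ) (1+ε) \ Bad).Infinite :=
    (Set.Ioo_infinite (by linarith)).diff ((finite_quartic B φ₀).union (finite_sq B))
  have key : ∀ t ∈ Set.Ioo (1:ℝ) (1+ε) \ Bad,
      DifferentiableAt ℝ (fun s => -6*(s * a s) + 2*t^4*(b s) - t^2*(b s)^2) φ₀ := by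
    rintro t ⟨⟨ht1, ht2⟩, htbad⟩
    rw [hBad, Set.mem_union] at htbad
    push_neg at htbad
    obtain ⟨hq, hs⟩ := htbad
    simp only [Set.mem_setOf_eq] at hq hs
    have h1x : 1 + (t - 1) = t := by ring
    have hxm : t - 1 ∈ Set.Ioo (0:ℝ) ε := ⟨by linarith, by linarith⟩
    have hD := hDrel (t-1) hxm
    rw [h1x] at hD
    have hDne : pd2 P6 (t-1) φ₀ ≠ 0 := by
      intro h0
      rw [h0, mul_zero, add_zero] at hD
      apply hq
      have ht0 : t ≠ 0 := by linarith
      have hfac : t * (2*((3*t^2 - B)*(t^2 - B) - 6*φ₀)) = 0 := by linear_combination -hD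
      rcases mul_eq_zero.mp hfac with h | h
      · exact absurd h ht0
      · linarith
    have hdP6 : DifferentiableAt ℝ (fun s => P6 (t-1) s) φ₀ := by
      by_contra hnd2
      exact hDne (deriv_zero_of_not_differentiableAt hnd2)
    have hfe : (fun s : ℝ => -6*(s * a s) + 2*t^4*(b s) - t^2*(b s)^2)
        = fun s => P6 (t-1) s - (6*s*t^2 - t^6) := by
      funext s
      rw [hP6, hP3, h1x]
      ring
    rw [hfe]
    exact hdP6.sub (by fun_prop)
  -- choose three distinct good parameters
  obtain ⟨t₁, ht₁⟩ := hTinf.nonempty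
  have h2 := hTinf.diff (Set.finite_singleton t₁)
  obtain ⟨t₂, ht₂⟩ := h2.nonempty
  obtain ⟨t₃, ht₃⟩ := (h2.diff (Set.finite_singleton t₂)).nonempty
  have hm1 : t₁ ∈ Set.Ioo (1:ℝ) (1+ε) \ Bad := ht₁
  have hm2 : t₂ ∈ Set.Ioo (1:ℝ) (1+ε) \ Bad := ht₂.1
  have hm3 : t₃ ∈ Set.Ioo (1:ℝ) (1+ε) \ Bad := ht₃.1.1
  have hne12 : t₁ ≠ t₂ := fun h => ht₂.2 (by simp [h])
  have hne13 : t₁ ≠ t₃ := fun h => ht₃.1.2 (by simp [h])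
  have hne23 : t₂ ≠ t₃ := fun h => ht₃.2 (by simp [h])
  have hg1 : (1:ℝ) < t₁ := hm1.1.1
  have hg2 : (1:ℝ) < t₂ := hm2.1.1
  have hg3 : (1:ℝ) < t₃ := hm3.1.1
  have hd1 := key t₁ hm1
  have hd2 := key t₂ hm2
  have hd3 := key t₃ hm3
  have hsq12 := sq_ne_of_gt_one hg1 hg2 hne12
  have hsq13 := sq_ne_of_gt_one hg1 hg3 hne13
  have hsq23 := sq_ne_of_gt_one hg2 hg3 hne23
  set c : ℝ := 2*(t₁^2 - t₂^2)*(t₂^2 - t₃^2)*(t₁^2 - t₃^2) with hcdef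
  have hc0 : c ≠ 0 := by
    apply mul_ne_zero
    apply mul_ne_zero
    apply mul_ne_zero two_ne_zero
    · exact sub_ne_zero.mpr hsq12
    · exact sub_ne_zero.mpr hsq23
    · exact sub_ne_zero.mpr hsq13
  apply hnd
  have hbeq : b = fun s =>
      c⁻¹ * ((t₂^2 - t₃^2) * ((-6*(s * a s) + 2*t₁^4*(b s) - t₁^2*(b s)^2)
                - (-6*(s * a s) + 2*t₂^4*(b s) - t₂^2*(b s)^2))
           - (t₁^2 - t₂^2) * ((-6*(s * a s) + 2*t₂^4*(b s) - t₂^2*(b s)^2)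
                - (-6*(s * a s) + 2*t₃^4*(b s) - t₃^2*(b s)^2))) := by
    funext s
    rw [hcdef]
    field_simp
    ring
  rw [hbeq]
  exact (((hd1.sub hd2).const_mul _).sub ((hd2.sub hd3).const_mul _)).const_mul c⁻¹

open Polynomial in
lemma q_differentiable
    (a b : ℝ → ℝ) (P3 P6 : ℝ → ℝ → ℝ)
    (hP3 : ∀ x φ, P3 x φ = (1+x)*((1+x)^2 - b φ))
    (hP6 : ∀ x φ, P6 x φ = 6*φ*((1+x)^2 - a φ) - (P3 x φ)^2)
    (ε : ℝ) (hε : 0 < ε)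
    (hcompat : ∀ x ∈ Set.Ioo (-ε) ε, ∀ φ ∈ Set.Ioo (-ε) ε,
      pd1 P6 x φ + P3 x φ * pd2 P6 x φ = 2 * pd2 P3 x φ * P6 x φ)
    (φ₀ : ℝ) (hφ₀ : φ₀ ∈ Set.Ioo (-ε) ε) :
    DifferentiableAt ℝ (fun s => s * a s) φ₀ := by
  by_contra hnd
  have hbd := b_differentiable a b P3 P6 hP3 hP6 ε hε hcompat φ₀ hφ₀
  set B := b φ₀ with hB
  set w := deriv b φ₀ with hw
  have hD0 : ∀ x : ℝ, pd2 P6 x φ₀ = 0 := by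
    intro x
    apply deriv_zero_of_not_differentiableAt
    intro hdiff
    apply hnd
    have heq : (fun s : ℝ => s * a s) = fun s =>
        ((6*s*(1+x)^2 - (1+x)^6 + 2*(1+x)^4*(b s) - (1+x)^2*(b s)^2) - P6 x s) / 6 := by
      funext s
      rw [hP6, hP3]
      ring
    rw [heq]
    have hnice : DifferentiableAt ℝ
        (fun s : ℝ => 6*s*(1+x)^2 - (1+x)^6 + 2*(1+x)^4*(b s) - (1+x)^2*(b s)^2) φ₀ := by
      fun_prop
    exact (hnice.sub hdiff).div_const 6
  have hE : ∀ x : ℝ, pd2 P3 x φ₀ = -((1+x)*w) := by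
    intro x
    have hfe : (fun s => P3 x s) = fun s : ℝ => (1+x)^3 - (1+x)*(b s) := by
      funext s
      rw [hP3]
      ring
    unfold pd2
    rw [hfe]
    exact ((hbd.hasDerivAt.const_mul (1+x)).const_sub _).deriv
  have hident : ∀ t ∈ Set.Ioo (1:ℝ) (1+ε),
      12*φ₀*t - 6*t^5 + 8*t^3*B - 2*t*B^2
        = 2 * (-(t*w)) * (6*φ₀*(t^2 - a φ₀) - (t*(t^2 - B))^2) := by
    intro t ht
    have hx' : t - 1 ∈ Set.Ioo (-ε) ε := ⟨by linarith [ht.1], by linarith [ht.2]⟩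
    have hc := hcompat (t-1) hx' φ₀ hφ₀
    have h1x : 1 + (t - 1) = t := by ring
    have hpd1 : pd1 P6 (t-1) φ₀
        = 12*φ₀*t - 6*t^5 + 8*t^3*B - 2*t*B^2 := by
      have hfe : (fun s => P6 s φ₀)
          = fun s : ℝ => 6*φ₀*((1+s)^2 - a φ₀) - ((1+s)*((1+s)^2 - B))^2 := by
        funext s; rw [hP6, hP3]
      unfold pd1
      rw [hfe]
      have := (hasDerivAt_P6_fst φ₀ (a φ₀) B (t-1)).deriv
      rw [h1x] at this
      exact this
    rw [hpd1, hD0, hE, hP6, hP3, h1x] at hc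
    rw [hB] at hc ⊢
    linarith [hc]
  set q0 : ℝ := φ₀ * a φ₀ with hq0
  set p : ℝ[X] := C (12*φ₀ - 2*B^2 - 12*q0*w) * X + C (8*B + 12*φ₀*w - 2*w*B^2) * X^3
      + C (4*B*w - 6) * X^5 + C (-(2*w)) * X^7 with hpdef
  have hroot : Set.Ioo (1:ℝ) (1+ε) ⊆ {t | p.IsRoot t} := by
    intro t ht
    have hc := hident t ht
    simp only [Set.mem_setOf_eq, hpdef, IsRoot, eval_add, eval_mul, eval_C, eval_pow, eval_X]
    rw [hq0]
    linear_combination hc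
  have hp0 : p = 0 :=
    Polynomial.eq_zero_of_infinite_isRoot p
      ((Set.Ioo_infinite (by linarith)).mono hroot)
  have h7 := congrArg (fun q => Polynomial.coeff q 7) hp0
  have h5 := congrArg (fun q => Polynomial.coeff q 5) hp0
  simp only [hpdef, coeff_add, coeff_C_mul, coeff_X_pow, coeff_X, coeff_zero] at h7 h5
  norm_num at h7 h5
  rw [h7] at h5
  norm_num at h5

/-- With `P₃(x,φ) = (1+x)[(1+x)²−b(φ)]`,
`P₆(x,φ) = 6φ[(1+x)²−a(φ)] − P₃(x,φ)²`, the compatibility identity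
`∂_x P₆ + P₃ ∂_φ P₆ = 2(∂_φ P₃)P₆`, and `δ` the implicit curve with `P₆(x,δ(x)) = 0`,
`δ(0) = 0`, the curve satisfies `δ'(x) = P₃(x,δ(x))`; consequently `δ'(0) = 0`,
`δ''(0) = ∂_x P₃(0,0) = 2`, and `δ` has a strict local minimum `0` at `x = 0`. -/
theorem boundary_curve_strict_minimum
    (a b : ℝ → ℝ)
    (ha : ContDiffAt ℝ 2 a 0) (hb : ContDiffAt ℝ 2 b 0)
    (ha0 : a 0 = 1/3) (hb0 : b 0 = 1)
    (P3 P6 : ℝ → ℝ → ℝ)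
    (hP3 : ∀ x φ, P3 x φ = (1+x)*((1+x)^2 - b φ))
    (hP6 : ∀ x φ, P6 x φ = 6*φ*((1+x)^2 - a φ) - (P3 x φ)^2)
    (ε : ℝ) (hε : 0 < ε)
    (hcompat : ∀ x ∈ Set.Ioo (-ε) ε, ∀ φ ∈ Set.Ioo (-ε) ε,
      pd1 P6 x φ + P3 x φ * pd2 P6 x φ = 2 * pd2 P3 x φ * P6 x φ)
    (δ : ℝ → ℝ) (hδ : ContDiffOn ℝ 2 δ (Set.Ioo (-ε) ε)) (hδ0 : δ 0 = 0)
    (hδmem : ∀ x ∈ Set.Ioo (-ε) ε, δ x ∈ Set.Ioo (-ε) ε)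
    (hzero : ∀ x ∈ Set.Ioo (-ε) ε, P6 x (δ x) = 0)
    (hnz : ∀ x ∈ Set.Ioo (-ε) ε, pd2 P6 x (δ x) ≠ 0) :
    (∀ x ∈ Set.Ioo (-ε) ε, deriv δ x = P3 x (δ x)) ∧
    deriv δ 0 = 0 ∧
    deriv (deriv δ) 0 = 2 ∧ pd1 P3 0 0 = 2 ∧
    (∃ ε' > 0, ∀ x ∈ Set.Ioo (-ε') ε', x ≠ 0 → 0 < δ x) := by
  have hmem0 : (0:ℝ) ∈ Set.Ioo (-ε) ε := ⟨by linarith, hε⟩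
  have hopen : IsOpen (Set.Ioo (-ε) ε) := isOpen_Ioo
  have hδdiffOn : DifferentiableOn ℝ δ (Set.Ioo (-ε) ε) :=
    hδ.differentiableOn (by norm_num)
  have hδdiff : ∀ x ∈ Set.Ioo (-ε) ε, HasDerivAt δ (deriv δ x) x := fun x hx =>
    ((hδdiffOn x hx).differentiableAt (hopen.mem_nhds hx)).hasDerivAt
  -- PART 1
  have part1 : ∀ x ∈ Set.Ioo (-ε) ε, deriv δ x = P3 x (δ x) := by
    intro x hx
    have hφ := hδmem x hx
    have hbd : DifferentiableAt ℝ b (δ x) :=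
      b_differentiable a b P3 P6 hP3 hP6 ε hε hcompat (δ x) hφ
    have hqd : DifferentiableAt ℝ (fun s => s * a s) (δ x) :=
      q_differentiable a b P3 P6 hP3 hP6 ε hε hcompat (δ x) hφ
    set d := deriv δ x with hd
    set w := deriv b (δ x) with hwdef
    set v := deriv (fun s : ℝ => s * a s) (δ x) with hvdef
    have hδ' : HasDerivAt δ d x := hδdiff x hx
    have hbδ : HasDerivAt (fun y => b (δ y)) (w * d) x :=
      (hbd.hasDerivAt.comp x hδ' :)
    have hqδ : HasDerivAt (fun y => δ y * a (δ y)) (v * d) x :=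
      (hqd.hasDerivAt.comp x hδ' :)
    have hid : HasDerivAt (fun y : ℝ => 1 + y) 1 x := (hasDerivAt_id x).const_add 1
    have h2 : HasDerivAt (fun y : ℝ => (1+y)^2) (2*(1+x)) x := by simpa using hid.fun_pow 2
    have h4 : HasDerivAt (fun y : ℝ => (1+y)^4) (4*(1+x)^3) x := by simpa using hid.fun_pow 4
    have h6 : HasDerivAt (fun y : ℝ => (1+y)^6) (6*(1+x)^5) x := by simpa using hid.fun_pow 6
    have h1 : HasDerivAt (fun y => 6*(δ y)*(1+y)^2)
        ((6*d)*(1+x)^2 + 6*(δ x)*(2*(1+x))) x := (hδ'.const_mul 6).mul h2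
    have hq6 : HasDerivAt (fun y => 6*(δ y * a (δ y))) (6*(v*d)) x := hqδ.const_mul 6
    have h4b : HasDerivAt (fun y => 2*(1+y)^4*(b (δ y)))
        ((2*(4*(1+x)^3))*(b (δ x)) + 2*(1+x)^4*(w*d)) x := (h4.const_mul 2).mul hbδ
    have h5 : HasDerivAt (fun y => (1+y)^2*(b (δ y))^2)
        ((2*(1+x))*(b (δ x))^2 + (1+x)^2*(2*(b (δ x))^1*(w*d))) x := h2.mul (hbδ.pow 2)
    have H := (((h1.fun_sub hq6).fun_sub h6).fun_add h4b).fun_sub h5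
    have hFeq : (fun y => P6 y (δ y)) = (fun y =>
        (((6*(δ y)*(1+y)^2 - 6*(δ y * a (δ y))) - (1+y)^6) + 2*(1+y)^4*(b (δ y)))
          - (1+y)^2*(b (δ y))^2) := by
      funext y
      rw [hP6, hP3]
      ring
    have hFd : HasDerivAt (fun y => P6 y (δ y))
        ((12*(δ x)*(1+x) - 6*(1+x)^5 + 8*(1+x)^3*(b (δ x)) - 2*(1+x)*(b (δ x))^2)
          + d * (6*(1+x)^2 - 6*v + 2*(1+x)^4*w - 2*(1+x)^2*(b (δ x))*w)) x := by
      rw [hFeq]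
      exact H.congr_deriv (by ring)
    have hF0 : HasDerivAt (fun y => P6 y (δ y)) 0 x := by
      have hev : (fun y => P6 y (δ y)) =ᶠ[nhds x] fun _ => 0 := by
        filter_upwards [hopen.mem_nhds hx] with y hy using hzero y hy
      exact (hasDerivAt_const x (0:ℝ)).congr_of_eventuallyEq hev
    have hsum := hFd.unique hF0
    -- partial derivatives
    have hA1 : pd1 P6 x (δ x)
        = 12*(δ x)*(1+x) - 6*(1+x)^5 + 8*(1+x)^3*(b (δ x)) - 2*(1+x)*(b (δ x))^2 := by
      have hfe : (fun s => P6 s (δ x))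
          = fun s : ℝ => 6*(δ x)*((1+s)^2 - a (δ x)) - ((1+s)*((1+s)^2 - b (δ x)))^2 := by
        funext s; rw [hP6, hP3]
      unfold pd1
      rw [hfe]
      exact (hasDerivAt_P6_fst (δ x) (a (δ x)) (b (δ x)) x).deriv
    have hA2 : pd2 P6 x (δ x)
        = 6*(1+x)^2 - 6*v + 2*(1+x)^4*w - 2*(1+x)^2*(b (δ x))*w := by
      have hfe : (fun s => P6 x s) = fun s : ℝ =>
          (((6*s*(1+x)^2 - 6*(s * a s)) - (1+x)^6) + 2*(1+x)^4*(b s)) - (1+x)^2*(b s)^2 := by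
        funext s; rw [hP6, hP3]; ring
      have hg1 : HasDerivAt (fun s : ℝ => 6*s*(1+x)^2) ((6*1)*(1+x)^2) (δ x) :=
        ((hasDerivAt_id (δ x)).const_mul 6).mul_const _
      have hg2 : HasDerivAt (fun s : ℝ => 6*(s * a s)) (6*v) (δ x) := hqd.hasDerivAt.const_mul 6
      have hg4 : HasDerivAt (fun s : ℝ => 2*(1+x)^4*(b s)) ((2*(1+x)^4)*w) (δ x) :=
        hbd.hasDerivAt.const_mul _
      have hg5 : HasDerivAt (fun s : ℝ => (1+x)^2*(b s)^2)
          ((1+x)^2*(2*(b (δ x))^1*w)) (δ x) := (hbd.hasDerivAt.pow 2).const_mul _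
      have HG := (((hg1.fun_sub hg2).sub_const ((1+x)^6)).fun_add hg4).fun_sub hg5
      unfold pd2
      rw [hfe, HG.deriv]
      ring
    have hcomp0 : pd1 P6 x (δ x) + P3 x (δ x) * pd2 P6 x (δ x) = 0 := by
      rw [hcompat x hx (δ x) hφ, hzero x hx]
      ring
    rw [hA1, hA2] at hcomp0
    have hA2ne : 6*(1+x)^2 - 6*v + 2*(1+x)^4*w - 2*(1+x)^2*(b (δ x))*w ≠ 0 := by
      have := hnz x hx
      rwa [hA2] at this
    have hfac : (d - P3 x (δ x)) * (6*(1+x)^2 - 6*v + 2*(1+x)^4*w - 2*(1+x)^2*(b (δ x))*w)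
        = 0 := by linear_combination hsum - hcomp0
    rcases mul_eq_zero.mp hfac with h | h
    · linarith [h]
    · exact absurd h hA2ne
  -- PART 2
  have part2 : deriv δ 0 = 0 := by
    rw [part1 0 hmem0, hP3, hδ0, hb0]
    norm_num
  -- PART 3
  have hδd0 : HasDerivAt δ 0 0 := by
    have := hδdiff 0 hmem0
    rwa [part2] at this
  have hbd0 : DifferentiableAt ℝ b (δ 0) :=
    b_differentiable a b P3 P6 hP3 hP6 ε hε hcompat (δ 0) (hδmem 0 hmem0)
  have hbδ0 : HasDerivAt (fun y => b (δ y)) (deriv b (δ 0) * 0) 0 :=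
    (hbd0.hasDerivAt.comp 0 hδd0 :)
  have hid0 : HasDerivAt (fun y : ℝ => 1 + y) 1 0 := (hasDerivAt_id 0).const_add 1
  have h20 : HasDerivAt (fun y : ℝ => (1+y)^2) (2*(1+(0:ℝ))) 0 := by simpa using hid0.fun_pow 2
  have hg : HasDerivAt (fun y => (1+y)*((1+y)^2 - b (δ y))) 2 0 := by
    have H := hid0.fun_mul (h20.fun_sub hbδ0)
    exact H.congr_deriv (by rw [hδ0, hb0]; norm_num)
  have hev2 : deriv δ =ᶠ[nhds 0] fun y => (1+y)*((1+y)^2 - b (δ y)) := by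
    filter_upwards [hopen.mem_nhds hmem0] with y hy
    rw [part1 y hy, hP3]
  have hdd : HasDerivAt (deriv δ) 2 0 := hg.congr_of_eventuallyEq hev2
  have part3 : deriv (deriv δ) 0 = 2 := hdd.deriv
  -- PART 4
  have part4 : pd1 P3 0 0 = 2 := by
    have hfe : (fun s => P3 s 0) = fun s : ℝ => (1+s)*((1+s)^2 - b 0) := by
      funext s; rw [hP3]
    have hid' : HasDerivAt (fun s : ℝ => 1 + s) 1 0 := (hasDerivAt_id 0).const_add 1
    have h2' : HasDerivAt (fun s : ℝ => (1+s)^2) (2*(1+(0:ℝ))) 0 := by simpa using hid'.fun_pow 2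
    have H := hid'.fun_mul ((h2'.sub_const (b 0)))
    unfold pd1
    rw [hfe, H.deriv, hb0]
    norm_num
  -- PART 5
  refine ⟨part1, part2, part3, part4, ?_⟩
  have hslope := hasDerivAt_iff_tendsto_slope.mp hdd
  have hev3 : ∀ᶠ y in nhdsWithin (0:ℝ) {(0:ℝ)}ᶜ, 1 < slope (deriv δ) 0 y :=
    hslope.eventually (lt_mem_nhds (by norm_num))
  rw [eventually_nhdsWithin_iff] at hev3
  obtain ⟨η, hη, hball⟩ := Metric.eventually_nhds_iff.mp hev3
  refine ⟨min η ε, lt_min hη hε, ?_⟩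
  intro x hx hx0
  have hslopeval : ∀ c : ℝ, c ≠ 0 → dist c 0 < η → 1 < deriv δ c / c := by
    intro c hc0 hcd
    have := hball hcd (by simpa using hc0)
    rwa [slope_def_field, part2, sub_zero, sub_zero] at this
  rcases lt_or_gt_of_ne hx0 with hneg | hpos
  · -- x < 0
    have hmine : min η ε ≤ ε := min_le_right _ _
    have hminh : min η ε ≤ η := min_le_left _ _
    have hxe : -ε < x := by
      have h := hx.1
      simp only [Set.mem_Ioo] at hx
      linarith [hx.1]
    have hsub : Set.Icc x 0 ⊆ Set.Ioo (-ε) ε := by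
      intro y hy
      exact ⟨by linarith [hy.1], by linarith [hy.2]⟩
    obtain ⟨c, hc, hcd⟩ := exists_deriv_eq_slope δ hneg (hδ.continuousOn.mono hsub)
      (hδdiffOn.mono (fun y hy => hsub ⟨le_of_lt hy.1, le_of_lt hy.2⟩))
    have hcneg : c < 0 := hc.2
    have hc0 : c ≠ 0 := ne_of_lt hcneg
    have hcball : dist c 0 < η := by
      rw [Real.dist_eq, sub_zero, abs_of_neg hcneg]
      have h := hx.1
      linarith [hc.1]
    have h1 := hslopeval c hc0 hcball
    have hdc : deriv δ c < c := by
      have h2 := (lt_div_iff_of_neg hcneg).mp h1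
      linarith
    have hδx : δ x = x * deriv δ c := by
      rw [hcd, hδ0]
      field_simp
      ring
    rw [hδx]
    exact mul_pos_of_neg_of_neg hneg (by linarith)
  · -- 0 < x
    have hmine : min η ε ≤ ε := min_le_right _ _
    have hminh : min η ε ≤ η := min_le_left _ _
    have hxe : x < ε := by linarith [hx.2]
    have hsub : Set.Icc 0 x ⊆ Set.Ioo (-ε) ε := by
      intro y hy
      exact ⟨by linarith [hy.1], by linarith [hy.2]⟩
    obtain ⟨c, hc, hcd⟩ := exists_deriv_eq_slope δ hpos (hδ.continuousOn.mono hsub)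
      (hδdiffOn.mono (fun y hy => hsub ⟨le_of_lt hy.1, le_of_lt hy.2⟩))
    have hcpos : 0 < c := hc.1
    have hc0 : c ≠ 0 := ne_of_gt hcpos
    have hcball : dist c 0 < η := by
      rw [Real.dist_eq, sub_zero, abs_of_pos hcpos]
      linarith [hc.2, hx.2]
    have h1 := hslopeval c hc0 hcball
    have hdc : c < deriv δ c := by
      have h2 := (one_lt_div hcpos).mp h1
      linarith
    have hδx : δ x = x * deriv δ c := by
      rw [hcd, hδ0]
      field_simp
      ring
    rw [hδx]
    exact mul_pos hpos (by linarith)
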